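/- (Bruhat decomposition for the finite unitary group U(2,1)(k_E/k_F).) Let Γ = { g ∈ GL₃(F) : gᵀ · β · ḡ = β } and let 𝔹 be the subgroup of upper triangular elements of Γ. Then every g ∈ Γ either lies in 𝔹 or can be written as g = b₁ · β · b₂ with b₁, b₂ ∈ 𝔹; that is, Γ = 𝔹 ∪ 𝔹β𝔹. -/

import Mathlib

open Matrix

private def Bm (F : Type*) [Field F] : Matrix (Fin 3) (Fin 3) F := !![0,0,1;0,1,0;1,0,0]

private lemma mulB {F : Type*} [Field F] (M N : Matrix (Fin 3) (Fin 3) F) (i j : Fin 3) :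
    (M * Bm F * N) i j = M i 2 * N 0 j + M i 1 * N 1 j + M i 0 * N 2 j := by
  simp [Bm, Matrix.mul_apply, Fin.sum_univ_three]

private lemma BB {F : Type*} [Field F] : Bm F * Bm F = 1 := by
  ext i j
  fin_cases i <;> fin_cases j <;> simp [Bm, Matrix.mul_apply, Fin.sum_univ_three, Matrix.vecHead, Matrix.vecTail]

private lemma BT {F : Type*} [Field F] : (Bm F)ᵀ = Bm F := by
  ext i j
  fin_cases i <;> fin_cases j <;> simp [Bm, Matrix.vecHead, Matrix.vecTail]

private lemma detB {F : Type*} [Field F] : (Bm F).det = -1 := by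
  simp [Bm, Matrix.det_fin_three]

private lemma Bmap {F : Type*} [Field F] (σ : F →+* F) : (Bm F).map σ = Bm F := by
  ext i j
  fin_cases i <;> fin_cases j <;> simp [Bm, Matrix.vecHead, Matrix.vecTail]

private theorem aux {F : Type*} [Field F] (σ : F →+* F)
    (hσσ : ∀ x : F, σ (σ x) = x)
    (g : Matrix (Fin 3) (Fin 3) F)
    (hg : gᵀ * Bm F * g.map σ = Bm F) :
    (g 1 0 = 0 ∧ g 2 0 = 0 ∧ g 2 1 = 0) ∨
      ∃ b₁ b₂ : Matrix (Fin 3) (Fin 3) F,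
        (b₁ᵀ * Bm F * b₁.map σ = Bm F ∧ b₁ 1 0 = 0 ∧ b₁ 2 0 = 0 ∧ b₁ 2 1 = 0) ∧
        (b₂ᵀ * Bm F * b₂.map σ = Bm F ∧ b₂ 1 0 = 0 ∧ b₂ 2 0 = 0 ∧ b₂ 2 1 = 0) ∧
        g = b₁ * Bm F * b₂ := by
  have hσ0 : ∀ x : F, σ x = 0 → x = 0 := fun x h => by
    have := hσσ x; rw [h, map_zero] at this; exact this.symm
  -- entry relations (columns)
  have e : ∀ i j : Fin 3, g 2 i * σ (g 0 j) + g 1 i * σ (g 1 j) + g 0 i * σ (g 2 j)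
      = Bm F i j := by
    intro i j
    have h := congrFun (congrFun hg i) j
    rw [mulB] at h
    simpa [Matrix.transpose_apply, Matrix.map_apply] using h
  -- determinant is nonzero
  have hdet1 : g.det * σ g.det = 1 := by
    have h := congrArg Matrix.det hg
    rw [Matrix.det_mul, Matrix.det_mul, Matrix.det_transpose, detB,
      show g.map ⇑σ = σ.mapMatrix g from rfl, ← RingHom.map_det] at h
    have : g.det * σ g.det * (-1) = -1 := by linear_combination h
    linear_combination -this
  have hdet : g.det ≠ 0 := fun h => by simp [h] at hdet1
  by_cases hc : g 2 0 = 0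
  · -- upper triangular case
    left
    have e00 := e 0 0
    have hB00 : Bm F 0 0 = (0 : F) := rfl
    simp only [hB00, hc, map_zero, mul_zero, zero_mul, add_zero, zero_add] at e00
    have h10 : g 1 0 = 0 := by
      have : g 1 0 * σ (g 1 0) = 0 := by linear_combination e00
      rcases mul_eq_zero.mp this with h | h
      · exact h
      · exact hσ0 _ h
    refine ⟨h10, hc, ?_⟩
    have h00 : g 0 0 ≠ 0 := by
      intro h
      apply hdet
      rw [Matrix.det_fin_three, h, h10, hc]
      ring
    have e01 := e 0 1
    have hB01 : Bm F 0 1 = (0 : F) := rfl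
    simp only [hB01, hc, h10, map_zero, mul_zero, zero_mul, add_zero, zero_add] at e01
    have : σ (g 2 1) = 0 := by
      rcases mul_eq_zero.mp (show g 0 0 * σ (g 2 1) = 0 by linear_combination e01) with h | h
      · exact absurd h h00
      · exact h
    exact hσ0 _ this
  · -- big cell
    right
    -- inverse facts
    have hdetσ : IsUnit (g.map σ).det := by
      refine IsUnit.of_mul_eq_one (a := (g.map σ).det) g.det ?_
      rw [show g.map ⇑σ = σ.mapMatrix g from rfl, ← RingHom.map_det]
      linear_combination hdet1
    have h1 : gᵀ * Bm F = Bm F * (g.map σ)⁻¹ := by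
      calc gᵀ * Bm F = gᵀ * Bm F * (g.map σ * (g.map σ)⁻¹) := by
            rw [Matrix.mul_nonsing_inv _ hdetσ, Matrix.mul_one]
        _ = gᵀ * Bm F * g.map σ * (g.map σ)⁻¹ := by simp only [Matrix.mul_assoc]
        _ = Bm F * (g.map σ)⁻¹ := by rw [hg]
    have h2 : g.map σ * Bm F * (gᵀ * Bm F) = 1 := by
      rw [h1]
      calc g.map σ * Bm F * (Bm F * (g.map σ)⁻¹)
          = g.map σ * (Bm F * Bm F) * (g.map σ)⁻¹ := by simp only [Matrix.mul_assoc]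
        _ = g.map σ * (g.map σ)⁻¹ := by rw [BB, Matrix.mul_one]
        _ = 1 := Matrix.mul_nonsing_inv _ hdetσ
    have hrowm : g.map σ * Bm F * gᵀ = Bm F := by
      calc g.map σ * Bm F * gᵀ = g.map σ * Bm F * gᵀ * (Bm F * Bm F) := by
            rw [BB, Matrix.mul_one]
        _ = g.map σ * Bm F * (gᵀ * Bm F) * Bm F := by simp only [Matrix.mul_assoc]
        _ = 1 * Bm F := by rw [h2]
        _ = Bm F := Matrix.one_mul _
    have hrow22 : σ (g 2 2) * g 2 0 + σ (g 2 1) * g 2 1 + σ (g 2 0) * g 2 2 = 0 := by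
      have h := congrFun (congrFun hrowm 2) 2
      rw [mulB] at h
      simp only [Matrix.transpose_apply, Matrix.map_apply] at h
      rw [show Bm F 2 2 = (0 : F) from rfl] at h
      exact h
    -- the parameters
    obtain ⟨ε, hεdef⟩ : ∃ ε : F, ε = σ (g 2 1 / g 2 0) := ⟨_, rfl⟩
    obtain ⟨γ, hγdef⟩ : ∃ γ : F, γ = -(g 2 1 * ε + g 2 2) / g 2 0 := ⟨_, rfl⟩
    have hσc : σ (g 2 0) ≠ 0 := fun h => hc (hσ0 _ h)
    have hσε : σ ε = g 2 1 / g 2 0 := by rw [hεdef]; exact hσσ _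
    have hε' : ε = σ (g 2 1) / σ (g 2 0) := by rw [hεdef, map_div₀]
    have hεc : σ ε * g 2 0 = g 2 1 := by rw [hσε, div_mul_cancel₀ _ hc]
    have hεε : ε * σ (g 2 0) = σ (g 2 1) := by rw [hε', div_mul_cancel₀ _ hσc]
    have hγc : γ * g 2 0 = -(g 2 1 * ε + g 2 2) := by rw [hγdef, div_mul_cancel₀ _ hc]
    have hσγc : σ γ * σ (g 2 0) = -(σ (g 2 1) * σ ε + σ (g 2 2)) := by
      rw [← _root_.map_mul, hγc, map_neg, map_add, _root_.map_mul]
    have hkey : γ + σ γ + ε * σ ε = 0 := by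
      have h5 : (γ + σ γ + ε * σ ε) * (g 2 0 * σ (g 2 0)) = 0 := by
        linear_combination (σ (g 2 0)) * hγc + (g 2 0) * hσγc
          + (ε * σ (g 2 0) - σ (g 2 1)) * hεc - hrow22
      rcases mul_eq_zero.mp h5 with h | h
      · exact h
      · rcases mul_eq_zero.mp h with h' | h'
        · exact absurd h' hc
        · exact absurd h' hσc
    -- the matrices
    obtain ⟨u, hu⟩ : ∃ u : Matrix (Fin 3) (Fin 3) F,
        u = !![1, -σ ε, γ; 0, 1, ε; 0, 0, 1] := ⟨_, rfl⟩
    obtain ⟨b₂, hb₂⟩ : ∃ b₂ : Matrix (Fin 3) (Fin 3) F,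
        b₂ = !![1, σ ε, σ γ; 0, 1, -ε; 0, 0, 1] := ⟨_, rfl⟩
    have hub : u * b₂ = 1 := by
      rw [hu, hb₂]
      ext i j
      fin_cases i <;> fin_cases j <;>
        simp [Matrix.mul_apply, Fin.sum_univ_three, Matrix.vecHead, Matrix.vecTail,
          Matrix.one_apply] <;>
        linear_combination hkey
    have humap : u.map σ = !![1, -ε, σ γ; 0, 1, σ ε; 0, 0, 1] := by
      rw [hu]
      ext i j
      fin_cases i <;> fin_cases j <;>
        simp [hσσ, Matrix.vecHead, Matrix.vecTail]
    have hb₂map : b₂.map σ = !![1, ε, γ; 0, 1, -σ ε; 0, 0, 1] := by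
      rw [hb₂]
      ext i j
      fin_cases i <;> fin_cases j <;>
        simp [hσσ, Matrix.vecHead, Matrix.vecTail]
    have huΓ : uᵀ * Bm F * u.map σ = Bm F := by
      rw [humap, hu]
      ext i j
      fin_cases i <;> fin_cases j <;>
        simp [Bm, Matrix.mul_apply, Fin.sum_univ_three, Matrix.vecHead, Matrix.vecTail] <;>
        linear_combination hkey
    have hb₂Γ : b₂ᵀ * Bm F * b₂.map σ = Bm F := by
      rw [hb₂map, hb₂]
      ext i j
      fin_cases i <;> fin_cases j <;>
        simp [Bm, Matrix.mul_apply, Fin.sum_univ_three, Matrix.vecHead, Matrix.vecTail] <;>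
        linear_combination hkey
    have hb₁Γ : (g * u * Bm F)ᵀ * Bm F * (g * u * Bm F).map σ = Bm F := by
      have hmapprod : (g * u * Bm F).map σ = g.map σ * u.map σ * Bm F := by
        rw [Matrix.map_mul, Matrix.map_mul, Bmap]
      have htr : (g * u * Bm F)ᵀ = Bm F * uᵀ * gᵀ := by
        rw [Matrix.transpose_mul, Matrix.transpose_mul, BT, Matrix.mul_assoc]
      rw [hmapprod, htr]
      calc Bm F * uᵀ * gᵀ * Bm F * (g.map σ * u.map σ * Bm F)
          = Bm F * (uᵀ * (gᵀ * Bm F * g.map σ * (u.map σ * Bm F))) := by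
            simp only [Matrix.mul_assoc]
        _ = Bm F * (uᵀ * (Bm F * (u.map σ * Bm F))) := by rw [hg]
        _ = Bm F * (uᵀ * Bm F * u.map σ) * Bm F := by simp only [Matrix.mul_assoc]
        _ = Bm F * Bm F * Bm F := by rw [huΓ]
        _ = Bm F := by rw [BB, Matrix.one_mul]
    have hb₁20 : (g * u * Bm F) 2 0 = 0 := by
      rw [hu]
      simp [Bm, Matrix.mul_apply, Fin.sum_univ_three, Matrix.vecHead, Matrix.vecTail]
      linear_combination hγc
    have hb₁21 : (g * u * Bm F) 2 1 = 0 := by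
      rw [hu]
      simp [Bm, Matrix.mul_apply, Fin.sum_univ_three, Matrix.vecHead, Matrix.vecTail]
      linear_combination -hεc
    have hb₁10 : (g * u * Bm F) 1 0 = 0 := by
      have h := congrFun (congrFun hb₁Γ 0) 0
      rw [mulB] at h
      simp only [Matrix.transpose_apply, Matrix.map_apply] at h
      rw [hb₁20, map_zero, show Bm F 0 0 = (0 : F) from rfl] at h
      have h' : (g * u * Bm F) 1 0 * σ ((g * u * Bm F) 1 0) = 0 := by
        linear_combination h
      rcases mul_eq_zero.mp h' with h'' | h''
      · exact h''
      · exact hσ0 _ h''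
    refine ⟨g * u * Bm F, b₂, ⟨hb₁Γ, hb₁10, hb₁20, hb₁21⟩,
      ⟨hb₂Γ, ?_, ?_, ?_⟩, ?_⟩
    · rw [hb₂]; rfl
    · rw [hb₂]; rfl
    · rw [hb₂]; rfl
    · have : g * u * Bm F * Bm F * b₂ = g := by
        calc g * u * Bm F * Bm F * b₂ = g * (u * (Bm F * Bm F * b₂)) := by
              simp only [Matrix.mul_assoc]
          _ = g * (u * b₂) := by rw [BB, Matrix.one_mul]
          _ = g := by rw [hub, Matrix.mul_one]
      exact this.symm

/-- Bruhat decomposition for the finite unitary group `U(2,1)(k_E/k_F)`. Let `q = p^f`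
(`p` an odd prime), let `F` be a finite field with `q²` elements with conjugation
`x̄ = x^q`, let `Γ = {g ∈ GL₃(F) : gᵀ·β·ḡ = β}` and let `𝔹` be the subgroup of upper
triangular elements of `Γ`. Then every `g ∈ Γ` either lies in `𝔹` or can be written as
`g = b₁·β·b₂` with `b₁, b₂ ∈ 𝔹`; that is, `Γ = 𝔹 ∪ 𝔹β𝔹`. -/
theorem finite_unitary_bruhat (p : ℕ) (hp : p.Prime) (hp2 : p ≠ 2) (f : ℕ) (hf : 0 < f)
    (q : ℕ) (hq : q = p ^ f) (F : Type*) [Field F] [Fintype F]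
    (hF : Fintype.card F = q ^ 2) :
    let β : Matrix (Fin 3) (Fin 3) F := !![0, 0, 1; 0, 1, 0; 1, 0, 0]
    let Γ : Set (Matrix (Fin 3) (Fin 3) F) := {g | gᵀ * β * g.map (· ^ q) = β}
    let 𝔹 : Set (Matrix (Fin 3) (Fin 3) F) := {g | g ∈ Γ ∧ g 1 0 = 0 ∧ g 2 0 = 0 ∧ g 2 1 = 0}
    ∀ g ∈ Γ, g ∈ 𝔹 ∨ ∃ b₁ ∈ 𝔹, ∃ b₂ ∈ 𝔹, g = b₁ * β * b₂ := by
  intro β Γ 𝔹 g hg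
  -- characteristic p
  haveI hchar : CharP F p := by
    obtain ⟨r, hr⟩ := CharP.exists F
    haveI := hr
    have hrp : r.Prime := CharP.char_is_prime F r
    obtain ⟨n, -, hcard⟩ := FiniteField.card F r
    have hpow : r ^ (n : ℕ) = p ^ (f * 2) := by
      rw [← hcard, hF, hq, ← pow_mul]
    have hrdvd : r ∣ p ^ (f * 2) := hpow ▸ dvd_pow_self r n.2.ne'
    have hrp' : r = p := (Nat.prime_dvd_prime_iff_eq hrp hp).mp (hrp.dvd_of_dvd_pow hrdvd)
    exact hrp' ▸ hr
  haveI : Fact p.Prime := ⟨hp⟩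
  set σ : F →+* F := iterateFrobenius F p f with hσdef
  have hσ : ∀ x : F, σ x = x ^ q := fun x => by
    rw [hσdef, iterateFrobenius_def, hq]
  have hσσ : ∀ x : F, σ (σ x) = x := fun x => by
    rw [hσ, hσ, ← pow_mul, show q * q = Fintype.card F by rw [hF, pow_two],
      FiniteField.pow_card]
  have hmapeq : ∀ M : Matrix (Fin 3) (Fin 3) F, M.map (· ^ q) = M.map σ := fun M => by
    ext i j
    simp [Matrix.map_apply, hσ]
  have hg' : gᵀ * Bm F * g.map σ = Bm F := by
    have h : gᵀ * β * g.map (· ^ q) = β := hg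
    rw [hmapeq] at h
    exact h
  rcases aux σ hσσ g hg' with ⟨h1, h2, h3⟩ | ⟨b₁, b₂, ⟨hb₁Γ, hb₁'⟩, ⟨hb₂Γ, hb₂'⟩, heq⟩
  · exact Or.inl ⟨hg, h1, h2, h3⟩
  · right
    refine ⟨b₁, ⟨?_, hb₁'⟩, b₂, ⟨?_, hb₂'⟩, ?_⟩
    · show b₁ᵀ * β * b₁.map (· ^ q) = β
      rw [hmapeq]
      exact hb₁Γ
    · show b₂ᵀ * β * b₂.map (· ^ q) = β
      rw [hmapeq]
      exact hb₂Γ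
    · exact heq
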